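/- For every b ∈ ℝ, the function g(s) = 2Φ(|b|√s) − 1 is concave on [0, ∞). -/

import Mathlib

open Real MeasureTheory Set Filter

/-- Standard Gaussian density φ(z) = (1/√(2π)) e^{−z²/2}. -/
noncomputable def gaussPdf (z : ℝ) : ℝ := (1 / Real.sqrt (2 * π)) * Real.exp (-z ^ 2 / 2)

/-- Standard Gaussian distribution function Φ(y) = ∫_{−∞}^y φ(z) dz. -/
noncomputable def gaussCdf (y : ℝ) : ℝ := ∫ z in Set.Iio y, gaussPdf z

/-- ψ_t(u) = (e^{−b²u/2}/(π√(u(t−u)))) · [ e^{−b²(t−u)/2}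
      + (b/2)·√(2π(t−u)) · (2Φ(b√(t−u)) − 1) ]. -/
noncomputable def psi (b t u : ℝ) : ℝ :=
  (Real.exp (-b ^ 2 * u / 2) / (π * Real.sqrt (u * (t - u)))) *
    (Real.exp (-b ^ 2 * (t - u) / 2) +
      (b / 2) * Real.sqrt (2 * π * (t - u)) *
        (2 * gaussCdf (b * Real.sqrt (t - u)) - 1))

/-- Inverse Gaussian first-passage density f_{τ₁}(t) = (|a−x|/t^{3/2}) φ((a+bt−x)/√t). -/
noncomputable def invGaussPdf (a x b t : ℝ) : ℝ :=
  (|a - x| / t ^ ((3 : ℝ) / 2)) * gaussPdf ((a + b * t - x) / Real.sqrt t)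

lemma gaussPdf_continuous : Continuous gaussPdf := by
  unfold gaussPdf
  fun_prop

lemma gaussPdf_nonneg (z : ℝ) : 0 ≤ gaussPdf z := by
  unfold gaussPdf
  positivity

lemma gaussPdf_integrable : Integrable gaussPdf := by
  have h : Integrable (fun z : ℝ => Real.exp (-(1/2 : ℝ) * z ^ 2)) :=
    integrable_exp_neg_mul_sq (by norm_num)
  have := h.const_mul (1 / Real.sqrt (2 * π))
  refine this.congr ?_
  filter_upwards with z
  unfold gaussPdf
  ring_nf

lemma gaussCdf_eq (y : ℝ) : gaussCdf y = gaussCdf 0 + ∫ z in (0:ℝ)..y, gaussPdf z := by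
  have h := intervalIntegral.integral_Iic_sub_Iic
    (gaussPdf_integrable.integrableOn (s := Iic 0)) (gaussPdf_integrable.integrableOn (s := Iic y))
  unfold gaussCdf
  rw [← integral_Iic_eq_integral_Iio, ← integral_Iic_eq_integral_Iio, ← h]
  ring

lemma hasDerivAt_gaussCdf (y : ℝ) : HasDerivAt gaussCdf (gaussPdf y) y := by
  have h : HasDerivAt (fun u => ∫ z in (0:ℝ)..u, gaussPdf z) (gaussPdf y) y :=
    intervalIntegral.integral_hasDerivAt_right
      gaussPdf_integrable.intervalIntegrable
      (gaussPdf_continuous.stronglyMeasurableAtFilter _ _)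
      gaussPdf_continuous.continuousAt
  have := h.const_add (gaussCdf 0)
  refine this.congr_of_eventuallyEq ?_
  filter_upwards with u
  exact gaussCdf_eq u

lemma gaussCdf_monotone : Monotone gaussCdf := by
  have : ∀ y, 0 ≤ deriv gaussCdf y := by
    intro y
    rw [(hasDerivAt_gaussCdf y).deriv]
    exact gaussPdf_nonneg y
  exact monotone_of_deriv_nonneg (fun y => (hasDerivAt_gaussCdf y).differentiableAt) this

lemma gaussCdf_comp_concave {c : ℝ} (hc : 0 ≤ c) :
    ConcaveOn ℝ (Set.Ici 0) (fun x => gaussCdf (c * x)) := by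
  have hd : ∀ x : ℝ, HasDerivAt (fun x => gaussCdf (c * x)) (c * gaussPdf (c * x)) x := by
    intro x
    have := (hasDerivAt_gaussCdf (c * x)).comp x ((hasDerivAt_id x).const_mul c)
    simpa [mul_comm, Function.comp_def] using this
  refine AntitoneOn.concaveOn_of_deriv (convex_Ici 0) ?_ ?_ ?_
  · exact fun x _ => ((hd x).differentiableAt).continuousAt.continuousWithinAt
  · exact fun x _ => ((hd x).differentiableAt).differentiableWithinAt
  · intro x hx y hy hxy
    rw [interior_Ici] at hx hy
    rw [(hd x).deriv, (hd y).deriv]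
    have hx0 : (0:ℝ) ≤ x := le_of_lt hx
    have hy0 : (0:ℝ) ≤ y := le_of_lt hy
    have : gaussPdf (c * y) ≤ gaussPdf (c * x) := by
      unfold gaussPdf
      have h1 : (c * x) ^ 2 ≤ (c * y) ^ 2 := by
        have : c * x ≤ c * y := mul_le_mul_of_nonneg_left hxy hc
        exact pow_le_pow_left₀ (by positivity) this 2
      have : Real.exp (-(c*y) ^ 2 / 2) ≤ Real.exp (-(c*x) ^ 2 / 2) := by
        apply Real.exp_le_exp.mpr
        linarith
      have hpos : (0:ℝ) ≤ 1 / Real.sqrt (2 * π) := by positivity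
      exact mul_le_mul_of_nonneg_left this hpos
    exact mul_le_mul_of_nonneg_left this hc

lemma sqrt_image_Ici : Real.sqrt '' Set.Ici 0 = Set.Ici 0 := by
  ext y
  constructor
  · rintro ⟨x, _, rfl⟩
    exact Real.sqrt_nonneg x
  · intro hy
    exact ⟨y ^ 2, by simpa using sq_nonneg y, by rw [Real.sqrt_sq hy]⟩

theorem stmt6 (b : ℝ) :
    ConcaveOn ℝ (Set.Ici 0) (fun s => 2 * gaussCdf (|b| * Real.sqrt s) - 1) := by
  have hc : (0:ℝ) ≤ |b| := abs_nonneg b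
  have hcomp : ConcaveOn ℝ (Set.Ici 0) ((fun x => gaussCdf (|b| * x)) ∘ Real.sqrt) := by
    refine ConcaveOn.comp ?_ ?_ ?_
    · rw [sqrt_image_Ici]; exact gaussCdf_comp_concave hc
    · exact Real.strictConcaveOn_sqrt.concaveOn
    · rw [sqrt_image_Ici]
      intro x _ y _ hxy
      exact gaussCdf_monotone (mul_le_mul_of_nonneg_left hxy hc)
  have h2 := (hcomp.smul (c := (2:ℝ)) (by norm_num)).add_const (-1 : ℝ)
  refine h2.congr ?_
  intro s _
  simp [Function.comp, smul_eq_mul]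
  ring
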